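/- Let K be a finite extension of ℚ_p. Then for every positive integer n, the quotient group K^×/(K^×)ⁿ is finite. -/

import Mathlib

open Polynomial in
/-- Binomial expansion abstract form. -/
lemma exists_binom_poly {A : Type*} [CommRing A] (a : A) (m : ℕ) :
    ∃ E : A[X], ∀ y : A, (1 + a * y) ^ m = 1 + m * a * y + a ^ 2 * y ^ 2 * E.eval y := by
  induction m with
  | zero => exact ⟨0, fun y => by simp⟩
  | succ m ih =>
    obtain ⟨E, hE⟩ := ih
    refine ⟨E + C ((m : A)) + C a * X * E, fun y => ?_⟩
    have h1 : (1 + a*y) ^ (m+1) = (1 + a*y) ^ m * (1 + a*y) := by ring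
    rw [h1, hE y]
    simp only [eval_add, eval_mul, eval_C, eval_X]
    push_cast
    ring

/-- telescoping divisibility -/
lemma dvd_sub_of_consec {A : Type*} [CommRing A] (d : A) (g : ℕ → A)
    (h : ∀ k, d ^ k ∣ g (k + 1) - g k) : ∀ m n, m ≤ n → d ^ m ∣ g n - g m := by
  intro m n hmn
  induction n with
  | zero => simp_all
  | succ N ih =>
    rcases Nat.lt_or_ge m (N+1) with hlt | hge
    · have hmN : m ≤ N := Nat.lt_succ_iff.mp hlt
      have h1 : g (N+1) - g m = (g (N+1) - g N) + (g N - g m) := by ring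
      rw [h1]
      exact dvd_add ((pow_dvd_pow d hmN).trans (h N)) (ih hmN)
    · have : m = N + 1 := le_antisymm hmn hge
      subst this; simp



variable {p : ℕ} [Fact p.Prime]

lemma padic_haus (c : ℤ_[p]) (h : ∀ k : ℕ, (p : ℤ_[p]) ^ k ∣ c) : c = 0 := by
  by_contra hc
  have hpos : 0 < ‖c‖ := by simpa [norm_pos_iff] using hc
  obtain ⟨m, hm⟩ := PadicInt.exists_pow_neg_lt p hpos
  have : ‖c‖ ≤ (p : ℝ) ^ (-(m : ℤ)) := by
    rw [PadicInt.norm_le_pow_iff_mem_span_pow, Ideal.mem_span_singleton]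
    exact h m
  linarith

lemma padic_prec (F : ℕ → ℤ_[p]) (h : ∀ k : ℕ, (p : ℤ_[p]) ^ k ∣ F (k + 1) - F k) :
    ∃ L : ℤ_[p], ∀ k : ℕ, (p : ℤ_[p]) ^ k ∣ L - F k := by
  have inst : IsPrecomplete (IsLocalRing.maximalIdeal ℤ_[p]) ℤ_[p] := inferInstance
  have key : ∀ {m n : ℕ}, m ≤ n →
      F m ≡ F n [SMOD (IsLocalRing.maximalIdeal ℤ_[p]) ^ m • (⊤ : Submodule ℤ_[p] ℤ_[p])] := by
    intro m n hmn
    simp only [← Ideal.one_eq_top, smul_eq_mul, mul_one, SModEq.sub_mem,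
      PadicInt.maximalIdeal_eq_span_p, Ideal.span_singleton_pow, Ideal.mem_span_singleton]
    exact dvd_sub_comm.mp (dvd_sub_of_consec _ F h m n hmn)
  obtain ⟨L, hL⟩ := inst.prec' F key
  refine ⟨L, fun k => ?_⟩
  have := hL k
  simp only [← Ideal.one_eq_top, smul_eq_mul, mul_one, SModEq.sub_mem,
    PadicInt.maximalIdeal_eq_span_p, Ideal.span_singleton_pow, Ideal.mem_span_singleton] at this
  exact dvd_sub_comm.mp this



variable {p : ℕ} [Fact p.Prime] {A : Type*} [CommRing A] [Algebra ℤ_[p] A]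
  [Module.Finite ℤ_[p] A] [Module.Free ℤ_[p] A]

open Module.Free

lemma dvd_iff_coords (z : ℤ_[p]) (x : A) :
    algebraMap ℤ_[p] A z ∣ x ↔ ∀ i, z ∣ (chooseBasis ℤ_[p] A).repr x i := by
  set b := chooseBasis ℤ_[p] A
  constructor
  · rintro ⟨y, rfl⟩ i
    have : algebraMap ℤ_[p] A z * y = z • y := (Algebra.smul_def z y).symm
    rw [this, map_smul]
    exact ⟨b.repr y i, rfl⟩
  · intro h
    choose c hc using h
    refine ⟨∑ i, c i • b i, ?_⟩
    calc x = ∑ i, b.repr x i • b i := (b.sum_repr x).symm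
    _ = ∑ i, (z * c i) • b i := by
        refine Finset.sum_congr rfl fun i _ => ?_
        rw [← hc i]
    _ = algebraMap ℤ_[p] A z * ∑ i, c i • b i := by
        rw [Finset.mul_sum]
        refine Finset.sum_congr rfl fun i _ => ?_
        rw [mul_smul, Algebra.smul_def]

lemma pow_p_dvd_iff_coords (k : ℕ) (x : A) :
    (p : A) ^ k ∣ x ↔ ∀ i, (p : ℤ_[p]) ^ k ∣ (chooseBasis ℤ_[p] A).repr x i := by
  have : (p : A) ^ k = algebraMap ℤ_[p] A ((p : ℤ_[p]) ^ k) := by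
    rw [map_pow, map_natCast]
  rw [this, dvd_iff_coords]

lemma module_haus (x : A) (h : ∀ k : ℕ, (p : A) ^ k ∣ x) : x = 0 := by
  set b := chooseBasis ℤ_[p] A
  have : b.repr x = 0 := by
    ext i
    exact padic_haus _ fun k => (pow_p_dvd_iff_coords k x).mp (h k) i
  simpa using b.repr.map_eq_zero_iff.mp this

lemma module_prec (f : ℕ → A) (h : ∀ k : ℕ, (p : A) ^ k ∣ f (k + 1) - f k) :
    ∃ L : A, ∀ k : ℕ, (p : A) ^ k ∣ L - f k := by
  set b := chooseBasis ℤ_[p] A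
  have hco : ∀ i, ∃ L : ℤ_[p], ∀ k, (p : ℤ_[p]) ^ k ∣ L - b.repr (f k) i := by
    intro i
    refine padic_prec (fun k => b.repr (f k) i) (fun k => ?_)
    have := (pow_p_dvd_iff_coords k (f (k+1) - f k)).mp (h k) i
    simpa using this
  choose L hL using hco
  refine ⟨∑ i, L i • b i, fun k => ?_⟩
  rw [pow_p_dvd_iff_coords]
  intro i
  have hrep : b.repr (∑ j, L j • b j) i = L i := by
    have := b.repr_sum_self L
    rw [show ((b.repr (∑ j, L j • b j)) i) = (⇑(b.repr (∑ j, L j • b j))) i from rfl, this]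
  rw [map_sub, Finsupp.sub_apply, hrep]
  exact hL i k



open Polynomial

/-- Newton iteration: in a ring complete and Hausdorff for `p`-divisibility,
elements `≡ 1 mod n³p²` are `n`-th powers. -/
lemma newton_pow {p : ℕ} {A : Type*} [CommRing A]
    (haus : ∀ x : A, (∀ k : ℕ, (p : A) ^ k ∣ x) → x = 0)
    (prec : ∀ f : ℕ → A, (∀ k : ℕ, (p : A) ^ k ∣ f (k + 1) - f k) →
      ∃ L : A, ∀ k : ℕ, (p : A) ^ k ∣ L - f k)
    (n : ℕ) (t : A) :
    ∃ x : A, x ^ n = 1 + (n : A) ^ 3 * (p : A) ^ 2 * t := by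
  obtain ⟨E, hE⟩ := exists_binom_poly ((n : A) * (p : A)) n
  set a : A := (n : A) * (p : A) with ha
  set Q : A[X] := C (p : A) * (X ^ 2 * E) with hQ
  have hQeval : ∀ y : A, Q.eval y = (p : A) * (y ^ 2 * E.eval y) := by
    intro y; simp [hQ]
  -- the iteration sequence
  let y : ℕ → A := fun j => Nat.rec 0 (fun _ yj => a * t - Q.eval yj) j
  have hy0 : y 0 = 0 := rfl
  have hystep : ∀ j, y (j + 1) = a * t - Q.eval (y j) := fun _ => rfl
  have hdiff : ∀ j, (p : A) ^ (j + 1) ∣ y (j + 1) - y j := by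
    intro j
    induction j with
    | zero =>
      rw [hystep, hy0, hQeval]
      exact ⟨(n : A) * t, by push_cast; ring⟩
    | succ j ih =>
      rw [hystep (j+1), hystep j]
      have h1 : a * t - Q.eval (y (j+1)) - (a * t - Q.eval (y j))
          = (p : A) * ((X ^ 2 * E : A[X]).eval (y j) - (X ^ 2 * E : A[X]).eval (y (j+1))) := by
        rw [hQeval, hQeval]
        simp only [eval_mul, eval_pow, eval_X]
        ring
      rw [h1, pow_succ, mul_comm ((p:A)^(j+1)) (p:A)]
      exact mul_dvd_mul dvd_rfl
        (dvd_trans (dvd_sub_comm.mp ih) (sub_dvd_eval_sub _ _ _))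
  obtain ⟨L, hL⟩ := prec y (fun k => (pow_dvd_pow (p : A) (Nat.le_succ k)).trans (hdiff k))
  -- G vanishes at the limit
  have hGL : L + Q.eval L - a * t = 0 := by
    apply haus
    intro k
    have h1 : L + Q.eval L - a * t
        = ((L - y k) + (Q.eval L - Q.eval (y k))) + (y k - y (k+1)) := by
      rw [hystep k]; ring
    rw [h1]
    refine dvd_add (dvd_add (hL k) ?_) ?_
    · exact dvd_trans (hL k) (sub_dvd_eval_sub _ _ _)
    · exact (pow_dvd_pow (p : A) (Nat.le_succ k)).trans (dvd_sub_comm.mp (hdiff k))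
  refine ⟨1 + a * L, ?_⟩
  have h2 := hE L
  rw [hQeval] at hGL
  rw [h2, ha]
  linear_combination ((n : A) * ((n : A) * (p : A))) * hGL



variable {p : ℕ} [Fact p.Prime]

lemma finite_quot_pow_p (A : Type*) [CommRing A] [Algebra ℤ_[p] A] [Module.Finite ℤ_[p] A]
    (k : ℕ) : Finite (A ⧸ Ideal.span {(p : A) ^ k}) := by
  set I : Ideal A := Ideal.span {(p : A) ^ k}
  set J : Ideal ℤ_[p] := Ideal.span {(p : ℤ_[p]) ^ k}
  -- the quotient is torsion over `J`
  have hT : Module.IsTorsionBySet ℤ_[p] (A ⧸ I) J := by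
    intro x j
    obtain ⟨x, rfl⟩ := Ideal.Quotient.mk_surjective x
    obtain ⟨c, hc⟩ := Ideal.mem_span_singleton.mp j.2
    have : (j : ℤ_[p]) • Ideal.Quotient.mk I x = Ideal.Quotient.mk I ((j : ℤ_[p]) • x) := rfl
    rw [this]
    rw [Ideal.Quotient.eq_zero_iff_mem, Algebra.smul_def, hc]
    refine Ideal.mul_mem_right _ _ (Ideal.mem_span_singleton.mpr ⟨algebraMap ℤ_[p] A c, ?_⟩)
    rw [map_mul, map_pow, map_natCast]
  letI : Module (ℤ_[p] ⧸ J) (A ⧸ I) := hT.module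
  haveI : IsScalarTower ℤ_[p] (ℤ_[p] ⧸ J) (A ⧸ I) := hT.isScalarTower
  haveI : Module.Finite ℤ_[p] (A ⧸ I) :=
    Module.Finite.of_surjective (Ideal.Quotient.mkₐ ℤ_[p] I).toLinearMap
      Ideal.Quotient.mk_surjective
  haveI : Module.Finite (ℤ_[p] ⧸ J) (A ⧸ I) :=
    Module.Finite.of_restrictScalars_finite ℤ_[p] (ℤ_[p] ⧸ J) (A ⧸ I)
  haveI : Finite (ℤ_[p] ⧸ J) := by
    have hker : RingHom.ker (PadicInt.toZModPow (p := p) k) = J := PadicInt.ker_toZModPow k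
    haveI : NeZero (p ^ k) := ⟨pow_ne_zero _ (Fact.out (p := p.Prime)).ne_zero⟩
    rw [← hker]
    exact Finite.of_injective _ (RingHom.kerLift_injective (PadicInt.toZModPow k))
  exact Module.finite_of_finite (ℤ_[p] ⧸ J)

lemma finite_quot_algebraMap (A : Type*) [CommRing A] [Algebra ℤ_[p] A] [Module.Finite ℤ_[p] A]
    (z : ℤ_[p]) (hz : z ≠ 0) : Finite (A ⧸ Ideal.span {algebraMap ℤ_[p] A z}) := by
  obtain ⟨k, hk⟩ := PadicInt.ideal_eq_span_pow_p (s := Ideal.span {z})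
    (by simpa [Ideal.span_singleton_eq_bot] using hz)
  -- p^k is a multiple of z
  have hpk : (p : ℤ_[p]) ^ k ∈ Ideal.span {z} := hk ▸ Ideal.mem_span_singleton.mpr dvd_rfl
  obtain ⟨w, hw⟩ := Ideal.mem_span_singleton.mp hpk
  -- hence a surjection from A ⧸ (p^k)
  have hle : Ideal.span {(p : A) ^ k} ≤ Ideal.span {algebraMap ℤ_[p] A z} := by
    rw [Ideal.span_singleton_le_span_singleton]
    refine ⟨algebraMap ℤ_[p] A w, ?_⟩
    rw [← map_mul, ← hw, map_pow, map_natCast]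
  haveI := finite_quot_pow_p (p := p) A k
  refine Finite.of_surjective (Ideal.Quotient.factor hle) ?_
  intro x
  obtain ⟨x, rfl⟩ := Ideal.Quotient.mk_surjective x
  exact ⟨Ideal.Quotient.mk _ x, Ideal.Quotient.factor_mk hle x⟩


set_option synthInstance.maxHeartbeats 1000000
set_option maxHeartbeats 1000000

theorem key_thm (p : ℕ) [Fact p.Prime] (K : Type) [Field K] [Algebra ℚ_[p] K]
    [FiniteDimensional ℚ_[p] K] [Algebra ℤ_[p] K] [IsScalarTower ℤ_[p] ℚ_[p] K]
    (n : ℕ) (hn : 0 < n) :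
    Finite (Kˣ ⧸ (powMonoidHom n : Kˣ →* Kˣ).range) := by
  haveI : NoZeroSMulDivisors ℤ_[p] K := by
    suffices hinj : Function.Injective (algebraMap ℤ_[p] K) from ⟨fun {c x} hcx => by rw [Algebra.smul_def, mul_eq_zero] at hcx; exact hcx.imp_left (fun h0 => hinj (by rw [h0, map_zero]))⟩
    rw [IsScalarTower.algebraMap_eq ℤ_[p] ℚ_[p] K]
    exact (algebraMap ℚ_[p] K).injective.comp (IsFractionRing.injective ℤ_[p] ℚ_[p])
  set R := integralClosure ℤ_[p] K with hR
  haveI : IsFractionRing R K := integralClosure.isFractionRing_of_finite_extension ℚ_[p] K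
  haveI : IsDedekindDomain R := integralClosure.isDedekindDomain ℤ_[p] ℚ_[p] K
  haveI : Module.Finite ℤ_[p] R := IsIntegralClosure.finite ℤ_[p] ℚ_[p] K R
  haveI : Module.Free ℤ_[p] R := IsIntegralClosure.module_free ℤ_[p] ℚ_[p] K R
  haveI : Algebra.IsIntegral ℤ_[p] R := IsIntegralClosure.isIntegral_algebra ℤ_[p] K
  -- every nonzero prime of `R` contains `p`
  have hple : ∀ P : Ideal R, P.IsPrime → P ≠ ⊥ → Ideal.span {(p : R)} ≤ P := by
    intro P hP hPb
    haveI := hP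
    have hmax : P.IsMaximal := Ideal.IsPrime.isMaximal hP hPb
    have hcom : (P.comap (algebraMap ℤ_[p] R)).IsMaximal :=
      Ideal.isMaximal_comap_of_isIntegral_of_isMaximal P
    have heq : P.comap (algebraMap ℤ_[p] R) = IsLocalRing.maximalIdeal ℤ_[p] :=
      IsLocalRing.eq_maximalIdeal hcom
    have hpP : (p : R) ∈ P := by
      have : (p : ℤ_[p]) ∈ P.comap (algebraMap ℤ_[p] R) := by
        rw [heq, PadicInt.maximalIdeal_eq_span_p]
        exact Ideal.mem_span_singleton.mpr dvd_rfl
      simpa using this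
    rwa [Ideal.span_singleton_le_iff_mem]
  -- finitely many primes
  haveI : Finite (R ⧸ Ideal.span {(p : R)}) := by
    have := finite_quot_pow_p (p := p) R 1
    simpa using this
  have hprimes : {I : Ideal R | I.IsPrime}.Finite := by
    have hsub : {I : Ideal R | I.IsPrime} ⊆
        {⊥} ∪ (Set.range fun J : Ideal (R ⧸ Ideal.span {(p : R)}) =>
          Ideal.comap (Ideal.Quotient.mk (Ideal.span {(p : R)})) J) := by
      intro P hP
      by_cases hPb : P = ⊥
      · exact Or.inl hPb
      · refine Or.inr ⟨P.map (Ideal.Quotient.mk _), ?_⟩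
        show Ideal.comap _ (Ideal.map _ P) = P
        rw [Ideal.comap_map_of_surjective _ Ideal.Quotient.mk_surjective,
          ← RingHom.ker_eq_comap_bot, Ideal.mk_ker, sup_eq_left.mpr (hple P hP hPb)]
    exact Set.Finite.subset ((Set.finite_singleton ⊥).union (Set.finite_range _)) hsub
  haveI : IsPrincipalIdealRing R := IsPrincipalIdealRing.of_finite_primes hprimes
  -- Newton: units congruent to 1 mod c are n-th powers
  set c : R := (n : R) ^ 3 * (p : R) ^ 2 with hc
  have hnewton : ∀ u : R, u - 1 ∈ Ideal.span {c} → ∃ x : R, x ^ n = u := by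
    intro u hu
    obtain ⟨t, ht⟩ := Ideal.mem_span_singleton.mp hu
    obtain ⟨x, hx⟩ := newton_pow (p := p) (A := R) (module_haus) (module_prec) n t
    exact ⟨x, by rw [hx]; linear_combination -ht - t * hc⟩
  -- the quotient ring R/c is finite
  have hcz : ((n : ℤ_[p]) ^ 3 * (p : ℤ_[p]) ^ 2) ≠ 0 :=
    mul_ne_zero (pow_ne_zero _ (Nat.cast_ne_zero.mpr hn.ne'))
      (pow_ne_zero _ (Nat.cast_ne_zero.mpr (Fact.out (p := p.Prime)).ne_zero))
  set cI : Ideal R := Ideal.span {c} with hcI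
  haveI : Finite (R ⧸ cI) := by
    have h1 : algebraMap ℤ_[p] R ((n : ℤ_[p]) ^ 3 * (p : ℤ_[p]) ^ 2) = c := by
      rw [map_mul, map_pow, map_pow, map_natCast, map_natCast, hc]
    have h2 := finite_quot_algebraMap (p := p) R ((n : ℤ_[p]) ^ 3 * (p : ℤ_[p]) ^ 2) hcz
    rwa [h1] at h2
  set N := (powMonoidHom n : Kˣ →* Kˣ).range with hN
  let f : Kˣ →* Kˣ ⧸ N := QuotientGroup.mk' N
  let j : Rˣ →* Kˣ := Units.map (algebraMap R K).toMonoidHom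
  let g : Rˣ →* Kˣ ⧸ N := f.comp j
  let h : Rˣ →* (R ⧸ cI)ˣ := Units.map (Ideal.Quotient.mk cI).toMonoidHom
  have hker : h.ker ≤ g.ker := by
    intro u hu
    have h1 : Ideal.Quotient.mk cI (u : R) = 1 := by
      have h0 : h u = 1 := hu
      have := congrArg (Units.val) h0
      simpa [h] using this
    have h2 : (u : R) - 1 ∈ cI := Ideal.Quotient.eq.mp (by rw [h1, map_one])
    obtain ⟨x, hx⟩ := hnewton (u : R) h2
    have hdvd : x ∣ (u : R) := hx ▸ dvd_pow_self x hn.ne'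
    have hxu : IsUnit x := isUnit_of_dvd_unit hdvd u.isUnit
    have hmem : j u ∈ N := by
      refine ⟨Units.map (algebraMap R K).toMonoidHom hxu.unit, ?_⟩
      ext
      show ((algebraMap R K) (hxu.unit : R)) ^ n = algebraMap R K (u : R)
      rw [← map_pow, hxu.unit_spec, hx]
    show f (j u) = 1
    exact (QuotientGroup.eq_one_iff (j u)).mpr hmem
  haveI : Finite (Rˣ ⧸ h.ker) :=
    Finite.of_equiv _ (QuotientGroup.quotientKerEquivRange h).symm.toEquiv
  haveI hfing : Finite (Rˣ ⧸ g.ker) := by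
    refine Finite.of_surjective
      (QuotientGroup.map h.ker g.ker (MonoidHom.id Rˣ) (by simpa using hker)) ?_
    intro x
    obtain ⟨u, rfl⟩ := QuotientGroup.mk'_surjective _ x
    exact ⟨QuotientGroup.mk u, rfl⟩
  haveI hfinrange : Finite g.range :=
    Finite.of_equiv _ (QuotientGroup.quotientKerEquivRange g).toEquiv
  -- generators: units of R together with generators of the finitely many primes
  haveI : DecidableEq K := Classical.decEq K
  let U : R → Kˣ := fun r => if hr : algebraMap R K r = 0 then 1 else Units.mk0 _ hr
  have hU : ∀ r : R, r ≠ 0 → (U r : K) = algebraMap R K r := by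
    intro r hr
    have : algebraMap R K r ≠ 0 := fun hc0 =>
      hr (IsFractionRing.injective R K (by rw [hc0, map_zero]))
    simp [U, this, hr]
  have hU0 : ∀ r : R, r ≠ 0 → algebraMap R K r ≠ 0 := by
    intro r hr hc0
    exact hr (IsFractionRing.injective R K (by rw [hc0, map_zero]))
  have hUmul : ∀ r s : R, r ≠ 0 → s ≠ 0 → U (r * s) = U r * U s := by
    intro r s hr hs
    ext
    rw [Units.val_mul, hU _ (mul_ne_zero hr hs), hU _ hr, hU _ hs, map_mul]
  let SP : Set Kˣ := U '' ((fun I : Ideal R => Submodule.IsPrincipal.generator I) '' {I : Ideal R | I.IsPrime})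
  have hSPfin : SP.Finite := (hprimes.image _).image _
  set S : Set Kˣ := Set.range j ∪ SP with hS
  have hrmem : ∀ r : R, r ≠ 0 → U r ∈ Subgroup.closure S := by
    intro r
    refine UniqueFactorizationMonoid.induction_on_prime r (fun h0 => absurd rfl h0) ?_ ?_
    · intro a ha _
      refine Subgroup.subset_closure (Or.inl ⟨ha.unit, ?_⟩)
      ext
      show algebraMap R K (ha.unit : R) = (U a : K)
      rw [ha.unit_spec, hU a ha.ne_zero]
    · intro a q ha hq ih _
      rw [hUmul q a hq.ne_zero ha]
      refine mul_mem ?_ (ih ha)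
      -- q is associated to the generator of the prime ideal it generates
      have hqI : (Ideal.span {q} : Ideal R).IsPrime :=
        (Ideal.span_singleton_prime hq.ne_zero).mpr hq
      have hgen : Ideal.span {Submodule.IsPrincipal.generator (Ideal.span {q} : Ideal R)}
          = Ideal.span {q} := Ideal.span_singleton_generator _
      obtain ⟨v, hv⟩ := Ideal.span_singleton_eq_span_singleton.mp hgen
      set q0 : R := Submodule.IsPrincipal.generator (Ideal.span {q} : Ideal R) with hq0
      have hq0z : q0 ≠ 0 := by
        intro h0
        rw [h0, Ideal.span_singleton_eq_bot.mpr rfl] at hgen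
        exact hq.ne_zero (Ideal.span_singleton_eq_bot.mp hgen.symm)
      have hqv : q = q0 * (v : R) := hv.symm
      rw [hqv, hUmul q0 (v : R) hq0z (Units.ne_zero v)]
      refine mul_mem (Subgroup.subset_closure (Or.inr ⟨q0, ⟨_, hqI, rfl⟩, rfl⟩)) ?_
      refine Subgroup.subset_closure (Or.inl ⟨v, ?_⟩)
      ext
      show algebraMap R K (v : R) = (U (v : R) : K)
      rw [hU _ (Units.ne_zero v)]
  have hclos : Subgroup.closure S = ⊤ := by
    rw [eq_top_iff]
    rintro x -
    obtain ⟨r, s, hs, hx⟩ := IsFractionRing.div_surjective (A := R) (x : K)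
    have hs0 : s ≠ 0 := nonZeroDivisors.ne_zero hs
    have hx0 : (x : K) ≠ 0 := Units.ne_zero x
    have hr0 : r ≠ 0 := by
      intro h0
      rw [h0, map_zero, zero_div] at hx
      exact hx0 hx.symm
    have hxeq : x = U r * (U s)⁻¹ := by
      ext
      rw [Units.val_mul, ← hx, Units.val_inv_eq_inv_val, hU r hr0, hU s hs0, div_eq_mul_inv]
    rw [hxeq]
    exact mul_mem (hrmem r hr0) (inv_mem (hrmem s hs0))
  -- the quotient is finitely generated and torsion, hence finite
  haveI hFG : Group.FG (Kˣ ⧸ N) := by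
    rw [Group.fg_iff]
    refine ⟨f '' S, ?_, ?_⟩
    · rw [← MonoidHom.map_closure, hclos]
      exact Subgroup.map_top_of_surjective f (QuotientGroup.mk'_surjective N)
    · rw [hS, Set.image_union]
      refine Set.Finite.union ?_ (hSPfin.image _)
      have : f '' Set.range j = Set.range g := by
        rw [← Set.range_comp]; rfl
      rw [this, ← MonoidHom.coe_range]
      exact g.range.carrier.toFinite
  have hT : Monoid.IsTorsion (Kˣ ⧸ N) := by
    intro q
    obtain ⟨x, rfl⟩ := QuotientGroup.mk'_surjective N q
    refine isOfFinOrder_iff_pow_eq_one.mpr ⟨n, hn, ?_⟩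
    rw [← map_pow]
    exact (QuotientGroup.eq_one_iff (x ^ n)).mpr ⟨x, rfl⟩
  exact CommGroup.finite_of_fg_torsion (Kˣ ⧸ N) hT


/-- for a finite extension `K` of `ℚ_p` and every positive integer `n`,
the quotient group `K^×/(K^×)ⁿ` is finite. -/
theorem units_quotient_pow_finite (p : ℕ) [Fact p.Prime] (K : Type) [Field K]
    [Algebra ℚ_[p] K] [FiniteDimensional ℚ_[p] K] (n : ℕ) (hn : 0 < n) :
    Finite (Kˣ ⧸ (powMonoidHom n : Kˣ →* Kˣ).range) := by
  letI : Algebra ℤ_[p] K := ((algebraMap ℚ_[p] K).comp (algebraMap ℤ_[p] ℚ_[p])).toAlgebra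
  haveI : IsScalarTower ℤ_[p] ℚ_[p] K := IsScalarTower.of_algebraMap_eq fun x => rfl
  exact key_thm p K n hn
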